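/- Let G be a finite group, n ≥ 2, and f₁,…,fₙ : G → S injective functions such that there exists u ∈ G with f_i(g) = f_{i+1}(ug) for all g ∈ G and 1 ≤ i ≤ n-1. Define f : G ≀ ℤₙ → Sⁿ by f(g₁,…,gₙ,τ) = (f_{τ(1)}(g₁), …, f_{τ(n)}(gₙ)). Then f is constant on each right coset of the cyclic subgroup H generated by h = (u, u, …, u, u^{1-n}, 1), and f takes distinct values on distinct right cosets of H. -/
import Mathlib


/-- Multiplication of the wreath product `G ≀ ℤₙ` on `(ZMod n → G) × ZMod n`:
`(g,τ)∘(g',τ') = (fun i => g (i + τ') * g' i, τ + τ')`, i.e. component `i` of the product is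
`g_{τ'(i)} g_i'` where `τ'` shifts indices cyclically. -/
def wmuln {G : Type*} [Group G] {n : ℕ} (x y : (ZMod n → G) × ZMod n) :
    (ZMod n → G) × ZMod n :=
  (fun i => x.1 (i + y.2) * y.1 i, x.2 + y.2)

/-- Natural powers with respect to `wmuln`. -/
def wpow {G : Type*} [Group G] {n : ℕ} (x : (ZMod n → G) × ZMod n) :
    ℕ → (ZMod n → G) × ZMod n
  | 0 => (fun _ => 1, 0)
  | m + 1 => wmuln (wpow x m) x

/-- The element `(u, u, …, u, u^{1-n}, 1)` of `G ≀ ℤₙ` (coordinates `1,…,n-1` equal `u`,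
coordinate `n ≡ 0` equal to `u^{1-n}`, last component `1 ∈ ZMod n`). -/
def helt {G : Type*} [Group G] (n : ℕ) (u : G) : (ZMod n → G) × ZMod n :=
  (fun i => if i = 0 then u ^ (1 - (n : ℤ)) else u, 1)

/-- The function `f : G ≀ ℤₙ → Sⁿ` given by `f(g₁,…,gₙ,τ) = (f_{τ(1)}(g₁), …, f_{τ(n)}(gₙ))`,
where `τ(i) = i + τ` and the functions are indexed by `ZMod n` (index `n` is `0`). -/
def fw {G S : Type*} {n : ℕ} (fs : ZMod n → G → S) (x : (ZMod n → G) × ZMod n) : ZMod n → S :=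
  fun i => fs (i + x.2) (x.1 i)

/-- Given injective `f₁,…,fₙ` (indexed by `ZMod n`, with `fₙ = fs 0`) and a
shift `u` with `fᵢ(g) = f_{i+1}(ug)` for `1 ≤ i ≤ n-1`, the function `fw fs` on `G ≀ ℤₙ` is
constant on each right coset of the cyclic subgroup generated by
`h = (u,…,u,u^{1-n},1)`, and takes distinct values on distinct right cosets. -/
theorem stmt8 {G S : Type*} [Group G] [Fintype G] (n : ℕ) (hn : 2 ≤ n)
    (fs : ZMod n → G → S) (hinj : ∀ i, Function.Injective (fs i)) (u : G)
    (hshift : ∀ i : ZMod n, i ≠ 0 → ∀ g, fs i g = fs (i + 1) (u * g)) :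
    (∀ (x : (ZMod n → G) × ZMod n) (m : ℕ),
        fw fs (wmuln (wpow (helt n u) m) x) = fw fs x) ∧
    (∀ x y : (ZMod n → G) × ZMod n,
        fw fs x = fw fs y → ∃ m : ℕ, y = wmuln (wpow (helt n u) m) x) := by
  haveI : NeZero n := ⟨by omega⟩
  -- chain of shifts
  have chain : ∀ k : ℕ, k ≤ n - 1 → ∀ g, fs 1 g = fs (1 + (k : ZMod n)) (u ^ k * g) := by
    intro k hk
    induction k with
    | zero => intro g; simp
    | succ k ih =>
      intro g
      have h1 : ((1 : ZMod n) + (k : ZMod n)) ≠ 0 := by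
        have : (((k + 1 : ℕ)) : ZMod n) ≠ 0 := by
          rw [Ne, ZMod.natCast_eq_zero_iff]
          intro hd
          have := Nat.le_of_dvd (by omega) hd
          omega
        push_cast at this
        rwa [add_comm]
      rw [ih (by omega) g, hshift _ h1]
      congr 1
      · push_cast; ring
      · rw [pow_succ', mul_assoc]
  have key0 : ∀ g, fs 1 (u ^ (1 - (n : ℤ)) * g) = fs 0 g := by
    intro g
    have := chain (n - 1) le_rfl (u ^ (1 - (n : ℤ)) * g)
    have hidx : (1 : ZMod n) + ((n - 1 : ℕ) : ZMod n) = 0 := by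
      have : ((n : ℕ) : ZMod n) = 0 := ZMod.natCast_self n
      have h2 : (1 : ZMod n) + ((n - 1 : ℕ) : ZMod n) = ((n : ℕ) : ZMod n) := by
        have h3 : (1 + (n - 1) : ℕ) = n := by omega
        rw [show (1:ZMod n) = ((1:ℕ):ZMod n) from Nat.cast_one.symm, ← Nat.cast_add, h3]
      rw [h2, ZMod.natCast_self]
    have helem : u ^ (n - 1 : ℕ) * (u ^ (1 - (n : ℤ)) * g) = g := by
      rw [← mul_assoc, ← zpow_natCast, ← zpow_add]
      have : ((n - 1 : ℕ) : ℤ) + (1 - (n : ℤ)) = 0 := by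
        have : (1 : ℕ) ≤ n := by omega
        push_cast [this]; ring
      rw [this, zpow_zero, one_mul]
    rw [hidx, helem] at this
    exact this
  -- one step invariance
  have step : ∀ x : (ZMod n → G) × ZMod n, fw fs (wmuln (helt n u) x) = fw fs x := by
    intro x
    funext i
    show fs (i + ((1 : ZMod n) + x.2)) ((if i + x.2 = 0 then u ^ (1 - (n:ℤ)) else u) * x.1 i)
        = fs (i + x.2) (x.1 i)
    by_cases hj : i + x.2 = 0
    · rw [if_pos hj]
      have : i + (1 + x.2) = 1 := by rw [← add_comm x.2 1, ← add_assoc, hj, zero_add]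
      rw [this, key0, hj]
    · rw [if_neg hj]
      have : i + (1 + x.2) = (i + x.2) + 1 := by ring
      rw [this, ← hshift _ hj]
  have assoc : ∀ a b c : (ZMod n → G) × ZMod n, wmuln (wmuln a b) c = wmuln a (wmuln b c) := by
    intro a b c
    unfold wmuln
    refine Prod.ext ?_ (by simp [add_assoc])
    funext i
    simp only [mul_assoc]
    congr 2
    ring
  have idl : ∀ x : (ZMod n → G) × ZMod n, wmuln (wpow (helt n u) 0) x = x := by
    intro x
    unfold wpow wmuln
    exact Prod.ext (by funext i; simp) (by simp)
  have key : ∀ (m : ℕ) (x : (ZMod n → G) × ZMod n),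
      fw fs (wmuln (wpow (helt n u) m) x) = fw fs x := by
    intro m
    induction m with
    | zero => intro x; rw [idl]
    | succ m ih =>
      intro x
      have : wpow (helt n u) (m + 1) = wmuln (wpow (helt n u) m) (helt n u) := rfl
      rw [this, assoc, ih, step]
  refine ⟨fun x m => key m x, fun x y hxy => ?_⟩
  have sec : ∀ m : ℕ, (wpow (helt n u) m : (ZMod n → G) × ZMod n).2 = (m : ZMod n) := by
    intro m
    induction m with
    | zero => simp [wpow]
    | succ m ih =>
      show (wpow (helt n u) m).2 + (helt n u).2 = _
      rw [ih]
      push_cast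
      rfl
  refine ⟨(y.2 - x.2).val, ?_⟩
  set m := (y.2 - x.2).val with hm
  set z := wmuln (wpow (helt n u) m) x with hz
  have hz2 : z.2 = y.2 := by
    show (wpow (helt n u) m).2 + x.2 = y.2
    rw [sec, hm, ZMod.natCast_val, ZMod.cast_id, sub_add_cancel]
  have hfz : fw fs z = fw fs y := by rw [hz, key, hxy]
  have h1 : z.1 = y.1 := by
    funext i
    have := congrFun hfz i
    unfold fw at this
    rw [hz2] at this
    exact hinj _ this
  exact (Prod.ext h1 hz2).symm
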